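/- arXiv:1310.7055 — 2 statements merged into one kernel-verified Lean document; each statement's English description precedes it below -/
import Mathlib

section
/- Let ω = (t_1, t_2, …) be a strictly increasing sequence of positive reals satisfying t_c/c → 1 as c → ∞. Then for every sequence c_1, c_2, … of positive integers with c_n → ∞ and c_n/n → 0, we have B(c_n,n)(ω)/√(2 c_n n) → 1 as n → ∞. -/
open MeasureTheory Filter Topology
open scoped ENNReal NNReal

/-- The function `f(p) = -log(1-p)` for `0 ≤ p < 1`, `f(1) = ∞`, evaluated at `p = i/n`,
taking values in `ℝ≥0∞`. -/
noncomputable def fE (n : ℕ) (i : ℕ) : ℝ≥0∞ :=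
  if i < n then ENNReal.ofReal (-Real.log (1 - (i : ℝ) / n)) else ⊤

/-- The embedded collision process: `Bemb n t c` is `B(c,n)(ω)` for the strictly increasing
sequence `ω = (t 1, t 2, …)` of positive reals (with `t 0 = 0`). -/
noncomputable def Bemb (n : ℕ) (t : ℕ → ℝ) : ℕ → ℕ
  | 0 => 0
  | c + 1 =>
      Bemb n t c +
        sInf {j : ℕ | 1 ≤ j ∧
          ENNReal.ofReal (t (c + 1) - t c) ≤
            ∑ i ∈ Finset.Ico (Bemb n t c - c) (Bemb n t c - c + j), fE n i}

lemma fE_top {n i : ℕ} (h : n ≤ i) : fE n i = ⊤ := if_neg (Nat.not_lt.mpr h)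

lemma fE_mono (n : ℕ) : Monotone (fE n) := by
  intro a b hab
  by_cases hb : b < n
  · have ha : a < n := lt_of_le_of_lt hab hb
    have hn0 : (0:ℝ) < n := by exact_mod_cast lt_of_le_of_lt (Nat.zero_le b) hb
    simp only [fE, if_pos ha, if_pos hb]
    apply ENNReal.ofReal_le_ofReal
    have hb1 : (b:ℝ) < n := by exact_mod_cast hb
    have h1 : (0:ℝ) < 1 - (b:ℝ)/n := by
      have := (div_lt_one hn0).mpr hb1
      linarith
    have h2 : (1:ℝ) - (b:ℝ)/n ≤ 1 - (a:ℝ)/n := by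
      have hab' : (a:ℝ) ≤ b := by exact_mod_cast hab
      have : (a:ℝ)/n ≤ (b:ℝ)/n := by gcongr
      linarith
    have := Real.log_le_log h1 h2
    linarith
  · rw [fE_top (Nat.not_lt.mp hb)]; exact le_top

lemma ofReal_div_le_fE (n i : ℕ) : ENNReal.ofReal ((i:ℝ)/n) ≤ fE n i := by
  by_cases h : i < n
  · have hn0 : (0:ℝ) < n := by exact_mod_cast lt_of_le_of_lt (Nat.zero_le i) h
    simp only [fE, if_pos h]
    apply ENNReal.ofReal_le_ofReal
    have hi1 : (i:ℝ) < n := by exact_mod_cast h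
    have h1 : (0:ℝ) < 1 - (i:ℝ)/n := by
      have := (div_lt_one hn0).mpr hi1
      linarith
    have := Real.log_le_sub_one_of_pos h1
    linarith
  · rw [fE_top (Nat.not_lt.mp h)]; exact le_top

lemma fE_le {n i : ℕ} (hn : 0 < n) (h : (i:ℝ)/n ≤ 1/2) :
    fE n i ≤ ENNReal.ofReal ((i:ℝ)/n + 2*((i:ℝ)/n)^2) := by
  have hn0 : (0:ℝ) < n := by exact_mod_cast hn
  have hi : i < n := by
    by_contra hc
    have : (n:ℝ) ≤ i := by exact_mod_cast Nat.not_lt.mp hc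
    have : (1:ℝ) ≤ (i:ℝ)/n := (le_div_iff₀ hn0).mpr (by linarith)
    linarith
  set p : ℝ := (i:ℝ)/n with hp
  have hp0 : 0 ≤ p := by positivity
  have h1 : (0:ℝ) < 1 - p := by linarith
  simp only [fE, if_pos hi]
  apply ENNReal.ofReal_le_ofReal
  have hlog : Real.log (1-p)⁻¹ ≤ (1-p)⁻¹ - 1 := Real.log_le_sub_one_of_pos (by positivity)
  rw [Real.log_inv] at hlog
  have hinv : (1-p)⁻¹ ≤ 1 + p + 2*p^2 := by
    rw [inv_eq_one_div, div_le_iff₀ h1]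
    nlinarith
  linarith

def bset (n : ℕ) (t : ℕ → ℝ) (c : ℕ) : Set ℕ :=
  {j : ℕ | 1 ≤ j ∧
    ENNReal.ofReal (t (c + 1) - t c) ≤
      ∑ i ∈ Finset.Ico (Bemb n t c - c) (Bemb n t c - c + j), fE n i}

lemma bemb_succ (n : ℕ) (t : ℕ → ℝ) (c : ℕ) :
    Bemb n t (c+1) = Bemb n t c + sInf (bset n t c) := rfl

lemma bset_nonempty (n : ℕ) (t : ℕ → ℝ) (c : ℕ) : (bset n t c).Nonempty := by
  refine ⟨n+1, Nat.succ_le_succ (Nat.zero_le n), ?_⟩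
  have : ∑ i ∈ Finset.Ico (Bemb n t c - c) (Bemb n t c - c + (n+1)), fE n i = ⊤ := by
    rw [ENNReal.sum_eq_top]
    exact ⟨max (Bemb n t c - c) n, by simp [Finset.mem_Ico]; omega, fE_top (le_max_right _ _)⟩
  rw [this]; exact le_top

lemma le_bemb (n : ℕ) (t : ℕ → ℝ) (c : ℕ) : c ≤ Bemb n t c := by
  induction c with
  | zero => exact Nat.zero_le _
  | succ c ih =>
    rw [bemb_succ]
    have h1 : 1 ≤ sInf (bset n t c) := (Nat.sInf_mem (bset_nonempty n t c)).1
    omega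

lemma P1 (n : ℕ) (t : ℕ → ℝ) (ht : StrictMono t) (ht0 : t 0 = 0) (c : ℕ) :
    ∑ i ∈ Finset.range (Bemb n t c - c), fE n i ≤ ENNReal.ofReal (t c) := by
  induction c with
  | zero => simp [Bemb]
  | succ c ih =>
    set J := Bemb n t c - c with hJdef
    set j := sInf (bset n t c) with hjdef
    have hj1 : 1 ≤ j := (Nat.sInf_mem (bset_nonempty n t c)).1
    have hcle := le_bemb n t c
    have hJ' : Bemb n t (c+1) - (c+1) = J + (j - 1) := by
      rw [bemb_succ]; omega
    have hsum : ∑ i ∈ Finset.Ico J (J + (j-1)), fE n i ≤ ENNReal.ofReal (t (c+1) - t c) := by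
      rcases Nat.lt_or_ge j 2 with hj2 | hj2
      · have : j = 1 := by omega
        simp [this]
      · have hlt : j - 1 < sInf (bset n t c) := by omega
        have hnm := Nat.notMem_of_lt_sInf hlt
        have h1j : 1 ≤ j - 1 := by omega
        rw [bset] at hnm
        simp only [Set.mem_setOf_eq, not_and] at hnm
        exact (not_le.mp (hnm h1j)).le
    rw [hJ', ← Finset.sum_range_add_sum_Ico (fE n) (Nat.le_add_right J (j-1))]
    calc ∑ i ∈ Finset.range J, fE n i + ∑ i ∈ Finset.Ico J (J + (j-1)), fE n i
        ≤ ENNReal.ofReal (t c) + ENNReal.ofReal (t (c+1) - t c) := add_le_add ih hsum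
      _ = ENNReal.ofReal (t (c+1)) := by
          rw [← ENNReal.ofReal_add (by rw [← ht0]; exact ht.monotone (Nat.zero_le c))
            (by have := ht (Nat.lt_succ_self c); linarith)]
          ring_nf

lemma P2 (n : ℕ) (t : ℕ → ℝ) (ht : StrictMono t) (ht0 : t 0 = 0) (c : ℕ) :
    ENNReal.ofReal (t c) ≤
      ∑ i ∈ Finset.range (Bemb n t c - c), fE n i + (c : ℝ≥0∞) * fE n (Bemb n t c - c) := by
  induction c with
  | zero => simp [ht0]
  | succ c ih =>
    set J := Bemb n t c - c with hJdef
    set j := sInf (bset n t c) with hjdef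
    have hj1 : 1 ≤ j := (Nat.sInf_mem (bset_nonempty n t c)).1
    have hcond : ENNReal.ofReal (t (c+1) - t c) ≤
        ∑ i ∈ Finset.Ico J (J + j), fE n i := (Nat.sInf_mem (bset_nonempty n t c)).2
    have hcle := le_bemb n t c
    have hJ' : Bemb n t (c+1) - (c+1) = J + (j - 1) := by
      rw [bemb_succ]; omega
    set J' := J + (j - 1) with hJ'def
    have hJJ' : J ≤ J' := Nat.le_add_right _ _
    have hsplit : ∑ i ∈ Finset.Ico J (J + j), fE n i
        = ∑ i ∈ Finset.Ico J J', fE n i + fE n J' := by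
      have : J + j = J' + 1 := by omega
      rw [this, Finset.sum_Ico_succ_top hJJ']
    have h1 : ENNReal.ofReal (t (c+1))
        = ENNReal.ofReal (t c) + ENNReal.ofReal (t (c+1) - t c) := by
      rw [← ENNReal.ofReal_add (by rw [← ht0]; exact ht.monotone (Nat.zero_le c))
        (by have := ht (Nat.lt_succ_self c); linarith)]
      ring_nf
    rw [hJ']
    calc ENNReal.ofReal (t (c+1))
        = ENNReal.ofReal (t c) + ENNReal.ofReal (t (c+1) - t c) := h1
      _ ≤ (∑ i ∈ Finset.range J, fE n i + (c : ℝ≥0∞) * fE n J)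
            + (∑ i ∈ Finset.Ico J J', fE n i + fE n J') := by
          rw [← hsplit]; exact add_le_add ih hcond
      _ = (∑ i ∈ Finset.range J, fE n i + ∑ i ∈ Finset.Ico J J', fE n i)
            + ((c : ℝ≥0∞) * fE n J + fE n J') := by ring
      _ ≤ ∑ i ∈ Finset.range J', fE n i + ((c : ℝ≥0∞) * fE n J' + fE n J') := by
          rw [Finset.sum_range_add_sum_Ico (fE n) hJJ']
          exact add_le_add_right (add_le_add_left
            (mul_le_mul_right (fE_mono n hJJ') _) _) _
      _ = ∑ i ∈ Finset.range J', fE n i + ((c:ℕ)+1 : ℝ≥0∞) * fE n J' := by ring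
      _ = ∑ i ∈ Finset.range J', fE n i + (((c+1):ℕ) : ℝ≥0∞) * fE n J' := by push_cast; ring

lemma sum_range_cast (m : ℕ) : ∑ i ∈ Finset.range m, (i:ℝ) = m*(m-1)/2 := by
  induction m with
  | zero => simp
  | succ k ih => rw [Finset.sum_range_succ, ih]; push_cast; ring

lemma realU (n : ℕ) (t : ℕ → ℝ) (ht : StrictMono t) (ht0 : t 0 = 0) (c : ℕ) (hn : 0 < n) :
    ((Bemb n t c - c : ℕ):ℝ) * (((Bemb n t c - c : ℕ):ℝ) - 1) ≤ 2 * n * t c := by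
  set J := Bemb n t c - c with hJdef
  have hT0 : 0 ≤ t c := by rw [← ht0]; exact ht.monotone (Nat.zero_le c)
  have h1 : ∑ i ∈ Finset.range J, ENNReal.ofReal ((i:ℝ)/n) ≤ ENNReal.ofReal (t c) :=
    le_trans (Finset.sum_le_sum fun i _ => ofReal_div_le_fE n i) (P1 n t ht ht0 c)
  rw [← ENNReal.ofReal_sum_of_nonneg (fun i _ => by positivity)] at h1
  have h2 : ∑ i ∈ Finset.range J, (i:ℝ)/n ≤ t c := (ENNReal.ofReal_le_ofReal_iff hT0).1 h1
  have h3 : ∑ i ∈ Finset.range J, (i:ℝ)/n = (J:ℝ)*((J:ℝ)-1)/2/n := by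
    rw [← Finset.sum_div, sum_range_cast]
  rw [h3] at h2
  have hn0 : (0:ℝ) < n := by exact_mod_cast hn
  rw [div_le_iff₀ hn0] at h2
  nlinarith

lemma realL (n : ℕ) (t : ℕ → ℝ) (ht : StrictMono t) (ht0 : t 0 = 0) (c : ℕ) (hn : 0 < n)
    (h2J : 2*((Bemb n t c - c : ℕ):ℝ) ≤ n) :
    2*(n:ℝ)^2 * t c ≤ (n:ℝ)*((Bemb n t c - c : ℕ):ℝ)*(((Bemb n t c - c : ℕ):ℝ)-1)
      + 4*((Bemb n t c - c : ℕ):ℝ)^3 + 2*(n:ℝ)*(c:ℝ)*((Bemb n t c - c : ℕ):ℝ)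
      + 4*(c:ℝ)*((Bemb n t c - c : ℕ):ℝ)^2 := by
  set J := Bemb n t c - c with hJdef
  have hn0 : (0:ℝ) < n := by exact_mod_cast hn
  have hJhalf : ∀ i : ℕ, i ≤ J → (i:ℝ)/n ≤ 1/2 := by
    intro i hi
    have : (i:ℝ) ≤ J := by exact_mod_cast hi
    rw [div_le_iff₀ hn0]
    linarith
  have hbound : ∀ i : ℕ, i ≤ J → fE n i ≤ ENNReal.ofReal ((i:ℝ)/n + 2*((i:ℝ)/n)^2) :=
    fun i hi => fE_le hn (hJhalf i hi)
  have key : ENNReal.ofReal (t c) ≤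
      ENNReal.ofReal ((∑ i ∈ Finset.range J, ((i:ℝ)/n + 2*((i:ℝ)/n)^2))
        + (c:ℝ) * ((J:ℝ)/n + 2*((J:ℝ)/n)^2)) := by
    refine le_trans (P2 n t ht ht0 c) ?_
    rw [ENNReal.ofReal_add (Finset.sum_nonneg fun i _ => by positivity) (by positivity),
      ENNReal.ofReal_sum_of_nonneg (fun i _ => by positivity),
      ENNReal.ofReal_mul (by positivity : (0:ℝ) ≤ (c:ℝ)), ENNReal.ofReal_natCast]
    exact add_le_add
      (Finset.sum_le_sum fun i hi => hbound i (Finset.mem_range.mp hi).le)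
      (mul_le_mul_right (hbound J le_rfl) _)
  have hrhs0 : 0 ≤ (∑ i ∈ Finset.range J, ((i:ℝ)/n + 2*((i:ℝ)/n)^2))
      + (c:ℝ) * ((J:ℝ)/n + 2*((J:ℝ)/n)^2) := by
    refine add_nonneg (Finset.sum_nonneg fun i _ => by positivity) (by positivity)
  have h2 := (ENNReal.ofReal_le_ofReal_iff hrhs0).1 key
  have hsum1 : ∑ i ∈ Finset.range J, (i:ℝ)/n = (J:ℝ)*((J:ℝ)-1)/2/n := by
    rw [← Finset.sum_div, sum_range_cast]
  have hsum2 : ∑ i ∈ Finset.range J, 2*((i:ℝ)/n)^2 ≤ J * (2*((J:ℝ)/n)^2) := by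
    have step : ∀ i ∈ Finset.range J, 2*((i:ℝ)/n)^2 ≤ 2*((J:ℝ)/n)^2 := by
      intro i hi
      have hi' : (i:ℝ) ≤ J := by exact_mod_cast (Finset.mem_range.mp hi).le
      have h1 : (i:ℝ)/n ≤ (J:ℝ)/n := by gcongr
      have h0 : 0 ≤ (i:ℝ)/n := by positivity
      nlinarith
    calc ∑ i ∈ Finset.range J, 2*((i:ℝ)/n)^2
        ≤ ∑ _i ∈ Finset.range J, 2*((J:ℝ)/n)^2 := Finset.sum_le_sum step
      _ = J * (2*((J:ℝ)/n)^2) := by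
          rw [Finset.sum_const, Finset.card_range, nsmul_eq_mul]
  rw [Finset.sum_add_distrib, hsum1] at h2
  have h3 : t c ≤ (J:ℝ)*((J:ℝ)-1)/2/n + (J:ℝ) * (2*((J:ℝ)/n)^2)
      + (c:ℝ) * ((J:ℝ)/n + 2*((J:ℝ)/n)^2) := by linarith
  have hcast : (J:ℝ)*((J:ℝ)-1)/2/n + (J:ℝ) * (2*((J:ℝ)/n)^2)
      + (c:ℝ) * ((J:ℝ)/n + 2*((J:ℝ)/n)^2)
      = ((n:ℝ)*(J:ℝ)*((J:ℝ)-1) + 4*(J:ℝ)^3 + 2*(n:ℝ)*(c:ℝ)*(J:ℝ) + 4*(c:ℝ)*(J:ℝ)^2)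
        / (2*(n:ℝ)^2) := by
    field_simp
    ring
  rw [hcast] at h3
  rw [le_div_iff₀ (by positivity)] at h3
  nlinarith

set_option maxHeartbeats 2000000 in
lemma arith (N C T J u : ℝ) (hN4 : 4 ≤ N) (hC1 : 1 ≤ C) (hJ0 : 0 ≤ J) (hT0 : 0 ≤ T)
    (hT2 : T/C ≤ 2) (hu0 : 0 ≤ u) (huu : u*u = C/N) (hu8 : u ≤ 1/8)
    (hU : J*(J-1) ≤ 2*N*T)
    (hL : 2*J ≤ N → 2*N^2*T ≤ N*J*(J-1) + 4*J^3 + 2*N*C*J + 4*C*J^2) :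
    (T/C - 100/N - 100*u - 100*(u*u) ≤ (J+C)^2/(2*C*N))
    ∧ ((J+C)^2/(2*C*N) ≤ T/C + 100/N + 100*u + 100*(u*u)) := by
  have hN0 : (0:ℝ) < N := by linarith
  have hC0 : (0:ℝ) < C := by linarith
  have hTC : T ≤ 2*C := by rw [div_le_iff₀ hC0] at hT2; linarith
  have huC : u*u*N = C := by rw [huu]; field_simp
  have hsq : (u*N)*(u*N) = C*N := by
    have h : (u*N)*(u*N) = (u*u)*(N*N) := by ring
    rw [h, huu]; field_simp
  have huN2 : 2 ≤ u*N := by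
    nlinarith [hsq, mul_nonneg hu0 hN0.le]
  have hJ3 : J ≤ 3*u*N := by
    by_contra h
    push_neg at h
    have hJr1 : (0:ℝ) < J - 1 := by nlinarith [huN2]
    nlinarith [hU, hTC, hsq, huN2, hJ0, mul_pos (show (0:ℝ) < J - 3*u*N by linarith) hJr1,
      mul_nonneg (mul_nonneg hu0 hN0.le) (show (0:ℝ) ≤ J - 3*u*N by linarith)]
  have h2J : 2*J ≤ N := by nlinarith [hJ3, hu8, hN0.le]
  have hL' := hL h2J
  have hJsq : J^2 ≤ 9*C*N := by
    nlinarith [mul_le_mul hJ3 hJ3 hJ0 (by positivity : (0:ℝ) ≤ 3*u*N), hsq]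
  have hJc : J^3 ≤ 27*u*C*N^2 := by
    calc J^3 ≤ (3*u*N)^3 := pow_le_pow_left₀ hJ0 hJ3 3
      _ = 27*(u*u*N)*u*N^2 := by ring
      _ = 27*C*u*N^2 := by rw [huC]
      _ = 27*u*C*N^2 := by ring
  have huN0 : (0:ℝ) ≤ u*N := mul_nonneg hu0 hN0.le
  constructor
  · rw [le_div_iff₀ (by positivity)]
    refine le_of_mul_le_mul_left ?_ hN0
    have hexp2 : N * ((T/C - 100/N - 100*u - 100*(u*u)) * (2*C*N))
        = 2*N^2*T - 200*C*N - 200*u*C*N^2 - 200*(u*u*N)*C*N := by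
      field_simp; ring
    rw [hexp2, huC]
    have e1 : 4*J^3 ≤ 108*u*C*N^2 := by linarith
    have e2 : 2*N*C*J ≤ 6*u*C*N^2 := by
      nlinarith [mul_le_mul_of_nonneg_left hJ3 (show (0:ℝ) ≤ 2*N*C by positivity)]
    have e3 : 4*C*J^2 ≤ 36*(C*C)*N := by nlinarith [hJsq, hC0.le]
    have e4 : N*J*(J-1) ≤ N*(J+C)^2 := by
      nlinarith [mul_nonneg hN0.le hJ0, mul_nonneg (mul_nonneg hN0.le hJ0) hC0.le,
        mul_nonneg hN0.le (mul_nonneg hC0.le hC0.le)]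
    linarith [hL', e1, e2, e3, e4, mul_nonneg hC0.le hN0.le,
      mul_nonneg (mul_nonneg (mul_nonneg hu0 hC0.le) hN0.le) hN0.le,
      mul_nonneg (mul_nonneg hC0.le hC0.le) hN0.le]
  · rw [div_le_iff₀ (by positivity)]
    have hexp : (T/C + 100/N + 100*u + 100*(u*u)) * (2*C*N)
        = 2*N*T + 200*C + 200*u*C*N + 200*(u*u*N)*C := by
      field_simp; ring
    rw [hexp, huC]
    have f1 : J^2 ≤ 2*N*T + J := by nlinarith [hU]
    have f2 : J*C ≤ 3*u*N*C := mul_le_mul_of_nonneg_right hJ3 hC0.le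
    have f3 : J ≤ 3*u*N*C := by
      nlinarith [hJ3, mul_nonneg huN0 (show (0:ℝ) ≤ C - 1 by linarith)]
    linarith [f1, f2, f3, mul_nonneg (mul_nonneg hu0 hN0.le) hC0.le, hC0.le,
      mul_nonneg hC0.le hC0.le, hC0]

lemma per_n (t : ℕ → ℝ) (ht : StrictMono t) (ht0 : t 0 = 0) (n cn : ℕ)
    (hc1 : 1 ≤ cn) (hn4 : 4 ≤ n)
    (hT2 : t cn / (cn:ℝ) ≤ 2) (hu8 : Real.sqrt ((cn:ℝ)/(n:ℝ)) ≤ 1/8) :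
    (t cn/(cn:ℝ) - 100/(n:ℝ) - 100*Real.sqrt ((cn:ℝ)/(n:ℝ))
        - 100*(Real.sqrt ((cn:ℝ)/(n:ℝ))*Real.sqrt ((cn:ℝ)/(n:ℝ)))
      ≤ (Bemb n t cn : ℝ)^2/(2*(cn:ℝ)*(n:ℝ)))
    ∧ ((Bemb n t cn : ℝ)^2/(2*(cn:ℝ)*(n:ℝ))
      ≤ t cn/(cn:ℝ) + 100/(n:ℝ) + 100*Real.sqrt ((cn:ℝ)/(n:ℝ))
        + 100*(Real.sqrt ((cn:ℝ)/(n:ℝ))*Real.sqrt ((cn:ℝ)/(n:ℝ)))) := by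
  have hn0 : 0 < n := by omega
  have hN0 : (0:ℝ) < n := by exact_mod_cast hn0
  have hC0 : (0:ℝ) < cn := by exact_mod_cast hc1
  have hB : (Bemb n t cn : ℝ) = ((Bemb n t cn - cn : ℕ):ℝ) + (cn:ℝ) := by
    rw [Nat.cast_sub (le_bemb n t cn)]; ring
  rw [hB]
  exact arith (n:ℝ) (cn:ℝ) (t cn) _ _
    (by exact_mod_cast hn4) (by exact_mod_cast hc1) (Nat.cast_nonneg _)
    (by rw [← ht0]; exact ht.monotone (Nat.zero_le cn)) hT2
    (Real.sqrt_nonneg _) (Real.mul_self_sqrt (by positivity)) hu8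
    (realU n t ht ht0 cn hn0) (fun h => realL n t ht ht0 cn hn0 h)
theorem stmt_5 (t : ℕ → ℝ) (ht : StrictMono t) (ht0 : t 0 = 0)
    (hTc : Tendsto (fun c : ℕ => t c / c) atTop (nhds 1))
    (c : ℕ → ℕ) (hcpos : ∀ n, 1 ≤ c n)
    (hcinf : Tendsto c atTop atTop)
    (hco : Tendsto (fun n : ℕ => (c n : ℝ) / n) atTop (nhds 0)) :
    Tendsto (fun n : ℕ => (Bemb n t (c n) : ℝ) / Real.sqrt (2 * c n * n)) atTop
      (nhds 1) := by
  have hu : Tendsto (fun n : ℕ => Real.sqrt ((c n:ℝ)/(n:ℝ))) atTop (𝓝 0) := by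
    have h := (Real.continuous_sqrt.tendsto 0).comp hco
    simpa only [Function.comp_def, Real.sqrt_zero] using h
  have hv : Tendsto (fun n : ℕ => t (c n) / (c n:ℝ)) atTop (𝓝 1) := hTc.comp hcinf
  have hinv : Tendsto (fun n : ℕ => 100 / (n:ℝ)) atTop (𝓝 0) :=
    tendsto_const_nhds.div_atTop tendsto_natCast_atTop_atTop
  have hlo : Tendsto (fun n : ℕ => t (c n)/(c n:ℝ) - 100/(n:ℝ)
      - 100*Real.sqrt ((c n:ℝ)/(n:ℝ))
      - 100*(Real.sqrt ((c n:ℝ)/(n:ℝ))*Real.sqrt ((c n:ℝ)/(n:ℝ)))) atTop (𝓝 1) := by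
    have h := ((hv.sub hinv).sub (hu.const_mul 100)).sub ((hu.mul hu).const_mul 100)
    simpa using h
  have hhi : Tendsto (fun n : ℕ => t (c n)/(c n:ℝ) + 100/(n:ℝ)
      + 100*Real.sqrt ((c n:ℝ)/(n:ℝ))
      + 100*(Real.sqrt ((c n:ℝ)/(n:ℝ))*Real.sqrt ((c n:ℝ)/(n:ℝ)))) atTop (𝓝 1) := by
    have h := ((hv.add hinv).add (hu.const_mul 100)).add ((hu.mul hu).const_mul 100)
    simpa using h
  have hbound : ∀ᶠ n in atTop,
      (t (c n)/(c n:ℝ) - 100/(n:ℝ) - 100*Real.sqrt ((c n:ℝ)/(n:ℝ))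
        - 100*(Real.sqrt ((c n:ℝ)/(n:ℝ))*Real.sqrt ((c n:ℝ)/(n:ℝ)))
        ≤ (Bemb n t (c n) : ℝ)^2/(2*(c n:ℝ)*(n:ℝ)))
      ∧ ((Bemb n t (c n) : ℝ)^2/(2*(c n:ℝ)*(n:ℝ))
        ≤ t (c n)/(c n:ℝ) + 100/(n:ℝ) + 100*Real.sqrt ((c n:ℝ)/(n:ℝ))
        + 100*(Real.sqrt ((c n:ℝ)/(n:ℝ))*Real.sqrt ((c n:ℝ)/(n:ℝ)))) := by
    have h2 : ∀ᶠ n in atTop, t (c n)/(c n:ℝ) ≤ 2 :=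
      hv.eventually (eventually_le_nhds (by norm_num))
    have h8 : ∀ᶠ n in atTop, Real.sqrt ((c n:ℝ)/(n:ℝ)) ≤ 1/8 :=
      hu.eventually (eventually_le_nhds (by norm_num))
    filter_upwards [h2, h8, eventually_ge_atTop 4] with n hT2 hu8 hn4
    exact per_n t ht ht0 n (c n) (hcpos n) hn4 hT2 hu8
  have key : Tendsto (fun n : ℕ => (Bemb n t (c n) : ℝ)^2/(2*(c n:ℝ)*(n:ℝ)))
      atTop (𝓝 1) :=
    tendsto_of_tendsto_of_tendsto_of_le_of_le' hlo hhi
      (hbound.mono fun n h => h.1) (hbound.mono fun n h => h.2)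
  have heq : (fun n : ℕ => (Bemb n t (c n) : ℝ) / Real.sqrt (2 * c n * n))
      = fun n : ℕ => Real.sqrt ((Bemb n t (c n) : ℝ)^2/(2*(c n:ℝ)*(n:ℝ))) := by
    funext n
    rw [Real.sqrt_div (by positivity), Real.sqrt_sq (by positivity)]
  rw [heq]
  have h := (Real.continuous_sqrt.tendsto 1).comp key
  simpa only [Function.comp_def, Real.sqrt_one] using h
end

section
/- Fix 0 < K < ∞. For every integer n ≥ 1, every integer c with 1 ≤ c ≤ Kn, and every real t > max(8K, 44): P(B(c,n)/√(2cn) > √t) ≤ c·e^{−ct/8}. -/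
open MeasureTheory ProbabilityTheory Filter Topology
open scoped ENNReal NNReal

/-- Number of collisions after `b` throws, `C(b,n) = b - |{X_1,…,X_b}|`. -/
def collisions {Ω : Type*} (X : ℕ → Ω → ℕ) (b : ℕ) (ω : Ω) : ℕ :=
  b - ((Finset.range b).image fun i => X i ω).card

/-- `B(c,n) = inf { b : C(b,n) ≥ c }` in the balls-in-bins model. -/
noncomputable def ballsB {Ω : Type*} (X : ℕ → Ω → ℕ) (c : ℕ) (ω : Ω) : ℕ :=
  sInf {b : ℕ | c ≤ collisions X b ω}

/-- The uniform distribution on the bins `{1, …, n}`, as a measure on `ℕ`. -/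
noncomputable def unifBins (n : ℕ) : Measure ℕ :=
  ((n : ℝ≥0∞))⁻¹ • ∑ k ∈ Finset.Icc 1 n, Measure.dirac k

variable {b : ℕ}

def reps (x : Fin b → ℕ) : Finset (Fin b) :=
  Finset.univ.filter (fun i => ∃ i', i' < i ∧ x i' = x i)

lemma card_image_add_card_reps (x : Fin b → ℕ) :
    (Finset.univ.image x).card + (reps x).card = b := by
  classical
  have h1 : ((reps x)ᶜ).card = (Finset.univ.image x).card := by
    apply Finset.card_bij (fun i _ => x i)
    · intro a ha; exact Finset.mem_image_of_mem x (Finset.mem_univ a)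
    · intro a ha a' ha' hxx
      simp only [reps, Finset.mem_compl, Finset.mem_filter, Finset.mem_univ, true_and,
        not_exists, not_and] at ha ha'
      by_contra hne
      rcases lt_or_gt_of_ne hne with h | h
      · exact ha' a h hxx
      · exact ha a' h hxx.symm
    · intro v hv
      rw [Finset.mem_image] at hv
      obtain ⟨i, -, hi⟩ := hv
      have hne : (Finset.univ.filter (fun i' => x i' = v)).Nonempty :=
        ⟨i, by simp [hi]⟩
      refine ⟨(Finset.univ.filter (fun i' => x i' = v)).min' hne, ?_, ?_⟩
      · have hmem := Finset.min'_mem _ hne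
        rw [Finset.mem_filter] at hmem
        simp only [reps, Finset.mem_compl, Finset.mem_filter, Finset.mem_univ, true_and,
          not_exists, not_and]
        intro i' hlt hxe
        have hle : (Finset.univ.filter (fun i' => x i' = v)).min' hne ≤ i' :=
          Finset.min'_le _ _ (by simp [hxe, hmem.2])
        exact absurd (lt_of_le_of_lt hle hlt) (lt_irrefl _)
      · have hmem := Finset.min'_mem _ hne
        rw [Finset.mem_filter] at hmem
        exact hmem.2
  have h2 := Finset.card_compl_add_card (reps x)
  rw [h1] at h2
  have h3 : Fintype.card (Fin b) = b := Fintype.card_fin b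
  omega

lemma collisions_eq_card_reps (x : Fin b → ℕ) :
    b - (Finset.univ.image x).card = (reps x).card := by
  have := card_image_add_card_reps x
  omega

noncomputable def minIdx (x : Fin b → ℕ) (i : Fin b) : Fin b :=
  (Finset.univ.filter (fun i' => x i' = x i)).min' ⟨i, by simp⟩

lemma minIdx_val (x : Fin b → ℕ) (i : Fin b) : x (minIdx x i) = x i := by
  have := Finset.min'_mem (Finset.univ.filter (fun i' => x i' = x i)) ⟨i, by simp⟩
  rw [Finset.mem_filter] at this
  exact this.2

lemma minIdx_not_mem_reps (x : Fin b → ℕ) (i : Fin b) : minIdx x i ∉ reps x := by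
  simp only [reps, Finset.mem_filter, Finset.mem_univ, true_and, not_exists, not_and]
  intro i' hlt hxe
  have hle : minIdx x i ≤ i' := by
    apply Finset.min'_le
    simp only [Finset.mem_filter, Finset.mem_univ, true_and]
    exact hxe.trans (minIdx_val x i)
  exact absurd (lt_of_le_of_lt hle hlt) (lt_irrefl _)

lemma fiber_card_le (n : ℕ) (R : Finset (Fin b)) :
    ((Fintype.piFinset fun _ : Fin b => Finset.Icc 1 n).filter
        fun x => reps x = R).card
      ≤ b ^ R.card * n.descFactorial (b - R.card) := by
  classical
  set F := (Fintype.piFinset fun _ : Fin b => Finset.Icc 1 n).filter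
        fun x => reps x = R with hF
  -- injective map into (R → Fin b) × (Rᶜ ↪ Icc 1 n)
  have key : ∀ x ∈ F, ∀ i j : Fin b, i ∉ R → j ∉ R → x i = x j → i = j := by
    intro x hx i j hi hj hxij
    rw [hF, Finset.mem_filter] at hx
    by_contra hne
    rcases lt_or_gt_of_ne hne with h | h
    · apply hj
      rw [← hx.2]
      simp only [reps, Finset.mem_filter, Finset.mem_univ, true_and]
      exact ⟨i, h, hxij⟩
    · apply hi
      rw [← hx.2]
      simp only [reps, Finset.mem_filter, Finset.mem_univ, true_and]
      exact ⟨j, h, hxij.symm⟩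
  have hicc : ∀ x ∈ F, ∀ i : Fin b, x i ∈ Finset.Icc 1 n := by
    intro x hx i
    rw [hF, Finset.mem_filter, Fintype.mem_piFinset] at hx
    exact hx.1 i
  let Φ : {x // x ∈ F} → ((↥R → Fin b) × ((↥(Rᶜ : Finset (Fin b))) ↪ ↥(Finset.Icc 1 n))) :=
    fun x => (fun i => minIdx x.val i.val,
      ⟨fun i => ⟨x.val i.val, hicc x.val x.prop i.val⟩, by
        intro i j hij
        have hij' : x.val i.val = x.val j.val := congrArg Subtype.val hij
        have hi : (i : Fin b) ∉ R := (Finset.mem_compl.mp i.prop)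
        have hj : (j : Fin b) ∉ R := (Finset.mem_compl.mp j.prop)
        exact Subtype.ext (key x.val x.prop i.val j.val hi hj hij')⟩)
  have hΦ : Function.Injective Φ := by
    intro x y hxy
    have h1 : ∀ i : ↥R, minIdx x.val i.val = minIdx y.val i.val := by
      intro i; exact congrFun (congrArg Prod.fst hxy) i
    have h2 : ∀ i : Fin b, i ∉ R → x.val i = y.val i := by
      intro i hi
      have := congrArg (fun e => (Prod.snd e) ⟨i, Finset.mem_compl.mpr hi⟩) hxy
      exact congrArg Subtype.val this
    apply Subtype.ext
    funext i
    by_cases hi : i ∈ R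
    · have hxreps : reps x.val = R := (Finset.mem_filter.mp x.prop).2
      have hyreps : reps y.val = R := (Finset.mem_filter.mp y.prop).2
      have hm : minIdx x.val i ∉ R := hxreps ▸ minIdx_not_mem_reps x.val i
      calc x.val i = x.val (minIdx x.val i) := (minIdx_val _ _).symm
        _ = y.val (minIdx x.val i) := h2 _ hm
        _ = y.val (minIdx y.val i) := by rw [h1 ⟨i, hi⟩]
        _ = y.val i := minIdx_val _ _
    · exact h2 i hi
  have hcard := Fintype.card_le_of_injective Φ hΦ
  rw [Fintype.card_coe] at hcard
  refine hcard.trans ?_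
  rw [Fintype.card_prod, Fintype.card_fun, Fintype.card_embedding_eq]
  simp [Fintype.card_coe, Nat.card_Icc, Finset.card_compl]

lemma count_bad (n c : ℕ) :
    ((Fintype.piFinset fun _ : Fin b => Finset.Icc 1 n).filter
        fun x => (reps x).card < c).card
      ≤ ∑ j ∈ Finset.range c, b.choose j * (b ^ j * n.descFactorial (b - j)) := by
  classical
  set Bad := (Fintype.piFinset fun _ : Fin b => Finset.Icc 1 n).filter
        fun x => (reps x).card < c with hBad
  set t : Finset (Finset (Fin b)) :=
    (Finset.range c).biUnion (fun j => Finset.powersetCard j Finset.univ) with ht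
  have hmaps : ∀ x ∈ Bad, reps x ∈ t := by
    intro x hx
    rw [hBad, Finset.mem_filter] at hx
    rw [ht, Finset.mem_biUnion]
    exact ⟨(reps x).card, Finset.mem_range.mpr hx.2,
      Finset.mem_powersetCard.mpr ⟨Finset.subset_univ _, rfl⟩⟩
  rw [Finset.card_eq_sum_card_fiberwise hmaps]
  have hdisj : Set.PairwiseDisjoint ↑(Finset.range c)
      (fun j => Finset.powersetCard j (Finset.univ : Finset (Fin b))) := by
    intro i _ j _ hij
    exact Finset.univ.pairwise_disjoint_powersetCard hij
  rw [ht, Finset.sum_biUnion hdisj]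
  apply Finset.sum_le_sum
  intro j hj
  have hstep : ∀ R ∈ Finset.powersetCard j (Finset.univ : Finset (Fin b)),
      (Bad.filter fun x => reps x = R).card ≤ b ^ j * n.descFactorial (b - j) := by
    intro R hR
    have hRcard : R.card = j := (Finset.mem_powersetCard.mp hR).2
    have hsub : Bad.filter (fun x => reps x = R) ⊆
        (Fintype.piFinset fun _ : Fin b => Finset.Icc 1 n).filter fun x => reps x = R := by
      intro x hx
      rw [Finset.mem_filter] at hx ⊢
      exact ⟨(Finset.mem_filter.mp hx.1).1, hx.2⟩
    calc (Bad.filter fun x => reps x = R).card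
        ≤ ((Fintype.piFinset fun _ : Fin b => Finset.Icc 1 n).filter
            fun x => reps x = R).card := Finset.card_le_card hsub
      _ ≤ b ^ R.card * n.descFactorial (b - R.card) := fiber_card_le n R
      _ = b ^ j * n.descFactorial (b - j) := by rw [hRcard]
  calc ∑ R ∈ Finset.powersetCard j Finset.univ, (Bad.filter fun x => reps x = R).card
      ≤ ∑ R ∈ Finset.powersetCard j (Finset.univ : Finset (Fin b)),
          (b ^ j * n.descFactorial (b - j)) := Finset.sum_le_sum hstep
    _ = b.choose j * (b ^ j * n.descFactorial (b - j)) := by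
        rw [Finset.sum_const, Finset.card_powersetCard, Finset.card_univ, Fintype.card_fin,
          smul_eq_mul]

lemma range_image_eq (f : ℕ → ℕ) (b : ℕ) :
    (Finset.range b).image f = Finset.univ.image (fun i : Fin b => f i.val) := by
  ext v
  simp only [Finset.mem_image, Finset.mem_range, Finset.mem_univ, true_and]
  constructor
  · rintro ⟨i, hi, rfl⟩; exact ⟨⟨i, hi⟩, rfl⟩
  · rintro ⟨i, rfl⟩; exact ⟨i.val, i.isLt, rfl⟩

lemma unifBins_singleton {n k : ℕ} (hk : k ∈ Finset.Icc 1 n) :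
    unifBins n {k} = (n : ℝ≥0∞)⁻¹ := by
  rw [unifBins, Measure.smul_apply, Measure.finset_sum_apply]
  have : ∑ j ∈ Finset.Icc 1 n, Measure.dirac j ({k} : Set ℕ)
      = ∑ j ∈ Finset.Icc 1 n, (if j = k then 1 else 0) := by
    apply Finset.sum_congr rfl
    intro j _
    rw [Measure.dirac_apply' _ (MeasurableSet.singleton k)]
    simp [Set.indicator_apply]
  rw [this, Finset.sum_ite_eq' _ k, if_pos hk, smul_eq_mul, mul_one]

lemma unifBins_compl_Icc (n : ℕ) :
    unifBins n (↑(Finset.Icc 1 n) : Set ℕ)ᶜ = 0 := by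
  rw [unifBins, Measure.smul_apply, Measure.finset_sum_apply]
  have : ∑ j ∈ Finset.Icc 1 n, Measure.dirac j (↑(Finset.Icc 1 n) : Set ℕ)ᶜ = 0 := by
    apply Finset.sum_eq_zero
    intro j hj
    rw [Measure.dirac_apply' _ (by measurability)]
    simp only [Set.indicator_apply, Set.mem_compl_iff, Finset.mem_coe]
    rw [if_neg (by simpa using hj)]
  rw [this, smul_eq_mul, mul_zero]

lemma prob_collisions_lt_le {Ω : Type*} [MeasurableSpace Ω] (μ : Measure Ω)
    [IsProbabilityMeasure μ] (n b c : ℕ)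
    (X : ℕ → Ω → ℕ) (hmeas : ∀ i, Measurable (X i))
    (hindep : iIndepFun X μ)
    (hunif : ∀ i, μ.map (X i) = unifBins n) :
    μ {ω | collisions X b ω < c} ≤
      (((Fintype.piFinset fun _ : Fin b => Finset.Icc 1 n).filter
          fun x => (reps x).card < c).card : ℝ≥0∞) * ((n : ℝ≥0∞)⁻¹) ^ b := by
  classical
  set Bad := (Fintype.piFinset fun _ : Fin b => Finset.Icc 1 n).filter
      fun x => (reps x).card < c with hBad
  set G : Set Ω := {ω | ∀ i, i < b → X i ω ∈ Finset.Icc 1 n} with hG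
  -- the complement of G is null
  have hGc : μ Gᶜ = 0 := by
    have hsub : Gᶜ ⊆ ⋃ i ∈ Finset.range b, X i ⁻¹' (↑(Finset.Icc 1 n) : Set ℕ)ᶜ := by
      intro ω hω
      simp only [hG, Set.mem_compl_iff, Set.mem_setOf_eq, not_forall] at hω
      obtain ⟨i, hi, hmem⟩ := hω
      refine Set.mem_biUnion (Finset.mem_range.mpr hi) ?_
      simpa using hmem
    refine le_antisymm ?_ zero_le
    refine le_trans (measure_mono hsub) ?_
    refine le_trans (measure_biUnion_finset_le _ _) ?_
    have : ∀ i ∈ Finset.range b, μ (X i ⁻¹' (↑(Finset.Icc 1 n) : Set ℕ)ᶜ) = 0 := by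
      intro i _
      rw [← Measure.map_apply (hmeas i) (by measurability), hunif i]
      exact unifBins_compl_Icc n
    rw [Finset.sum_congr rfl this]
    simp
  -- extension of a vector to ℕ → ℕ
  let ext : (Fin b → ℕ) → (ℕ → ℕ) := fun x i => if h : i < b then x ⟨i, h⟩ else 0
  let A : (Fin b → ℕ) → Set Ω := fun x => ⋂ i ∈ Finset.range b, X i ⁻¹' {ext x i}
  have hsub2 : {ω | collisions X b ω < c} ∩ G ⊆ ⋃ x ∈ Bad, A x := by
    intro ω ⟨hωE, hωG⟩
    set x : Fin b → ℕ := fun i => X i.val ω with hx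
    have hxBad : x ∈ Bad := by
      rw [hBad, Finset.mem_filter, Fintype.mem_piFinset]
      constructor
      · intro i; exact hωG i.val i.isLt
      · have : collisions X b ω = (reps x).card := by
          rw [collisions, range_image_eq, collisions_eq_card_reps]
        rw [← this]; exact hωE
    refine Set.mem_biUnion hxBad ?_
    simp only [A, Set.mem_iInter, Set.mem_preimage, Set.mem_singleton_iff]
    intro i hi
    rw [Finset.mem_range] at hi
    simp [ext, hi, hx]
  have hA : ∀ x ∈ Bad, μ (A x) = ((n : ℝ≥0∞)⁻¹) ^ b := by
    intro x hxBad
    have := hindep.measure_inter_preimage_eq_mul (Finset.range b)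
      (sets := fun i => {ext x i}) (fun i _ => MeasurableSet.singleton _)
    have h2 : μ (A x) = ∏ i ∈ Finset.range b, μ (X i ⁻¹' {ext x i}) := this
    rw [h2]
    have heach : ∀ i ∈ Finset.range b, μ (X i ⁻¹' {ext x i}) = (n : ℝ≥0∞)⁻¹ := by
      intro i hi
      rw [Finset.mem_range] at hi
      rw [← Measure.map_apply (hmeas i) (MeasurableSet.singleton _), hunif i]
      apply unifBins_singleton
      have : ext x i = x ⟨i, hi⟩ := dif_pos hi
      rw [this]
      rw [hBad, Finset.mem_filter, Fintype.mem_piFinset] at hxBad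
      exact hxBad.1 _
    rw [Finset.prod_congr rfl heach, Finset.prod_const, Finset.card_range]
  calc μ {ω | collisions X b ω < c}
      ≤ μ (({ω | collisions X b ω < c} ∩ G) ∪ Gᶜ) := by
        apply measure_mono
        intro ω hω
        by_cases h : ω ∈ G
        · exact Or.inl ⟨hω, h⟩
        · exact Or.inr h
    _ ≤ μ ({ω | collisions X b ω < c} ∩ G) + μ Gᶜ := measure_union_le _ _
    _ = μ ({ω | collisions X b ω < c} ∩ G) := by rw [hGc, add_zero]
    _ ≤ μ (⋃ x ∈ Bad, A x) := measure_mono hsub2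
    _ ≤ ∑ x ∈ Bad, μ (A x) := measure_biUnion_finset_le _ _
    _ = ∑ x ∈ Bad, ((n : ℝ≥0∞)⁻¹) ^ b := Finset.sum_congr rfl hA
    _ = (Bad.card : ℝ≥0∞) * ((n : ℝ≥0∞)⁻¹) ^ b := by
        rw [Finset.sum_const, nsmul_eq_mul]

lemma descFactorial_le_real (n m : ℕ) (hn : 1 ≤ n) :
    (n.descFactorial m : ℝ) ≤ (n : ℝ) ^ m * Real.exp (-(((m : ℝ) * ((m : ℝ) - 1)) / (2 * n))) := by
  have hn0 : (0 : ℝ) < n := by exact_mod_cast hn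
  rcases lt_or_ge n m with h | h
  · rw [Nat.descFactorial_eq_zero_iff_lt.mpr h]
    norm_num
    positivity
  · -- m ≤ n
    have hsum : (∑ i ∈ Finset.range m, (i : ℝ)) = (m : ℝ) * ((m : ℝ) - 1) / 2 := by
      have h2 : ((∑ i ∈ Finset.range m, i) * 2 : ℕ) = m * (m - 1) := Finset.sum_range_id_mul_two m
      rcases Nat.eq_zero_or_pos m with hm | hm
      · simp [hm]
      · have hcast : ((m - 1 : ℕ) : ℝ) = (m : ℝ) - 1 := by
          rw [Nat.cast_sub hm]; norm_num
        have := congrArg (fun k : ℕ => (k : ℝ)) h2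
        push_cast at this
        rw [Nat.cast_sub hm] at this
        push_cast at this
        linarith
    rw [Nat.descFactorial_eq_prod_range]
    push_cast
    have hcast : ∀ i ∈ Finset.range m, ((n - i : ℕ) : ℝ) = (n : ℝ) - i := by
      intro i hi
      rw [Finset.mem_range] at hi
      rw [Nat.cast_sub (le_of_lt (lt_of_lt_of_le hi h))]
    rw [Finset.prod_congr rfl hcast]
    have hstep : ∀ i ∈ Finset.range m, (n : ℝ) - i ≤ (n : ℝ) * Real.exp (-((i : ℝ) / n)) := by
      intro i hi
      have h1 : 1 - (i : ℝ) / n ≤ Real.exp (-((i : ℝ) / n)) := by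
        have := Real.add_one_le_exp (-((i : ℝ) / n))
        linarith
      calc (n : ℝ) - i = n * (1 - (i : ℝ) / n) := by field_simp
        _ ≤ n * Real.exp (-((i : ℝ) / n)) := by
            apply mul_le_mul_of_nonneg_left h1 (le_of_lt hn0)
    calc ∏ i ∈ Finset.range m, ((n : ℝ) - i)
        ≤ ∏ i ∈ Finset.range m, (n : ℝ) * Real.exp (-((i : ℝ) / n)) := by
          apply Finset.prod_le_prod
          · intro i hi
            rw [Finset.mem_range] at hi
            have : (i : ℝ) ≤ n := by
              have : (i : ℝ) < m := by exact_mod_cast hi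
              have : (m : ℝ) ≤ n := by exact_mod_cast h
              linarith
            linarith
          · exact hstep
      _ = (n : ℝ) ^ m * Real.exp (-(((m : ℝ) * ((m : ℝ) - 1)) / (2 * n))) := by
          rw [Finset.prod_mul_distrib, Finset.prod_const, Finset.card_range, ← Real.exp_sum]
          congr 1
          rw [Finset.sum_neg_distrib, ← Finset.sum_div, hsum]
          ring

lemma aux_theta (cr nr tr sr br mr : ℝ) (h1 : 1 ≤ cr) (h2 : 1 ≤ nr)
    (h3 : 0 < tr) (h4 : sr ^ 2 = 2 * cr * nr * tr) (h5 : 0 ≤ sr) (h6 : sr ≤ nr * tr / 2)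
    (h7 : sr - 1 ≤ br) (h8 : br ≤ sr) (h9 : 4 * cr ≤ br) (h10 : br - cr + 1 ≤ mr) :
    (9 / 32) * (cr * tr) ≤ (mr * (mr - 1)) / (2 * nr) := by
  have hbr0 : (0 : ℝ) ≤ br := by linarith
  have st1 : (9 / 16) * br ^ 2 ≤ mr * (mr - 1) := by
    have p1 : (0 : ℝ) ≤ 3 / 4 * br := by linarith
    have p2 : 3 / 4 * br ≤ mr - 1 := by linarith
    have p3 : 3 / 4 * br + 1 ≤ mr := by linarith
    have p4 : (3 / 4 * br + 1) * (3 / 4 * br) ≤ mr * (mr - 1) :=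
      mul_le_mul p3 p2 p1 (by linarith)
    nlinarith [p4]
  have st2 : sr ^ 2 - 2 * sr ≤ br ^ 2 := by nlinarith [sq_nonneg (br - sr + 1)]
  have st3 : cr * nr * tr ≤ sr ^ 2 - 2 * sr := by nlinarith
  rw [le_div_iff₀ (by linarith : (0 : ℝ) < 2 * nr)]
  nlinarith [st1, st2, st3]

lemma analytic_bound (K t : ℝ) (hK : 0 < K) (n c : ℕ) (hn : 1 ≤ n) (hc : 1 ≤ c)
    (hcK : (c : ℝ) ≤ K * n) (ht : max (8 * K) 44 < t) :
    ((∑ j ∈ Finset.range c,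
        (Nat.floor (Real.sqrt (2 * c * n * t))).choose j *
          ((Nat.floor (Real.sqrt (2 * c * n * t))) ^ j *
            n.descFactorial (Nat.floor (Real.sqrt (2 * c * n * t)) - j)) : ℕ) : ℝ)
      * ((n : ℝ)⁻¹) ^ (Nat.floor (Real.sqrt (2 * c * n * t)))
      ≤ (c : ℝ) * Real.exp (-((c : ℝ) * t) / 8) := by
  have h44 : (44 : ℝ) < t := lt_of_le_of_lt (le_max_right _ _) ht
  have h8K : 8 * K < t := lt_of_le_of_lt (le_max_left _ _) ht
  have ht0 : (0 : ℝ) < t := by linarith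
  have hnR : (1 : ℝ) ≤ n := by exact_mod_cast hn
  have hcR : (1 : ℝ) ≤ c := by exact_mod_cast hc
  have hnt : 8 * (c : ℝ) ≤ n * t := by nlinarith
  set s : ℝ := Real.sqrt (2 * c * n * t) with hs
  set b : ℕ := Nat.floor s with hb
  have h2cnt : (0 : ℝ) ≤ 2 * c * n * t := by positivity
  have hs0 : 0 ≤ s := Real.sqrt_nonneg _
  have hs2 : s ^ 2 = 2 * c * n * t := Real.sq_sqrt h2cnt
  have h4cs : ((4 * c : ℕ) : ℝ) ≤ s := by
    rw [hs, show ((4 * c : ℕ) : ℝ) = 4 * (c : ℝ) by push_cast; ring,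
      Real.le_sqrt (by positivity) (by positivity)]
    nlinarith
  have hb4c : 4 * c ≤ b := Nat.le_floor h4cs
  have hbs : (b : ℝ) ≤ s := Nat.floor_le hs0
  have hsb : s ≤ (b : ℝ) + 1 := le_of_lt (Nat.lt_floor_add_one s)
  have hn0 : (0 : ℝ) < n := by linarith
  have hsnt : s ≤ (n : ℝ) * t / 2 := by
    rw [hs, show (n : ℝ) * t / 2 = Real.sqrt (((n : ℝ) * t / 2) ^ 2) from
      (Real.sqrt_sq (by positivity)).symm]
    apply Real.sqrt_le_sqrt
    nlinarith
  push_cast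
  have hterm : ∀ j ∈ Finset.range c,
      ((b.choose j : ℝ) * ((b : ℝ) ^ j * (n.descFactorial (b - j) : ℝ))) * ((n : ℝ)⁻¹) ^ b
        ≤ Real.exp (-((c : ℝ) * t) / 8) := by
    intro j hj
    rw [Finset.mem_range] at hj
    have hjb : j ≤ b := by omega
    set m : ℕ := b - j with hm
    have hmcast : (m : ℝ) = (b : ℝ) - j := by rw [hm, Nat.cast_sub hjb]
    have hjc : (j : ℝ) ≤ (c : ℝ) - 1 := by
      have : (j : ℝ) + 1 ≤ c := by exact_mod_cast hj
      linarith
    have hbc : 4 * (c : ℝ) ≤ b := by exact_mod_cast hb4c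
    have htheta : (9 / 32) * ((c : ℝ) * t) ≤ ((m : ℝ) * ((m : ℝ) - 1)) / (2 * n) :=
      aux_theta (c : ℝ) (n : ℝ) t s (b : ℝ) (m : ℝ) hcR hnR ht0 hs2 hs0 hsnt
        (by linarith) hbs (by exact_mod_cast hb4c) (by rw [hmcast]; linarith)
    have hchoose : (b.choose j : ℝ) ≤ (b : ℝ) ^ j / (j.factorial : ℝ) := by
      rw [le_div_iff₀ (by positivity : (0 : ℝ) < (j.factorial : ℝ))]
      have hnat : j.factorial * b.choose j ≤ b ^ j := by
        rw [← Nat.descFactorial_eq_factorial_mul_choose]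
        exact Nat.descFactorial_le_pow b j
      calc (b.choose j : ℝ) * j.factorial = ((j.factorial * b.choose j : ℕ) : ℝ) := by
            push_cast; ring
        _ ≤ ((b ^ j : ℕ) : ℝ) := by exact_mod_cast hnat
        _ = (b : ℝ) ^ j := by push_cast; ring
    have hdesc := descFactorial_le_real n m hn
    set E := Real.exp (-(((m : ℝ) * ((m : ℝ) - 1)) / (2 * n))) with hE
    have hE0 : (0 : ℝ) ≤ E := le_of_lt (Real.exp_pos _)
    have step1 : ((b.choose j : ℝ) * ((b : ℝ) ^ j * (n.descFactorial m : ℝ))) * ((n : ℝ)⁻¹) ^ b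
        ≤ ((b : ℝ) ^ j / (j.factorial : ℝ)) * ((b : ℝ) ^ j * ((n : ℝ) ^ m * E)) * ((n : ℝ)⁻¹) ^ b := by
      have h1 : (0 : ℝ) ≤ ((n : ℝ)⁻¹) ^ b := by positivity
      apply mul_le_mul_of_nonneg_right _ h1
      apply mul_le_mul hchoose _ (by positivity) (by positivity)
      exact mul_le_mul_of_nonneg_left hdesc (by positivity)
    have step2 : ((b : ℝ) ^ j / (j.factorial : ℝ)) * ((b : ℝ) ^ j * ((n : ℝ) ^ m * E)) * ((n : ℝ)⁻¹) ^ b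
        = (((b : ℝ) ^ 2 / n) ^ j / (j.factorial : ℝ)) * E := by
      have hsplit : (n : ℝ) ^ b = (n : ℝ) ^ m * (n : ℝ) ^ j := by
        rw [← pow_add]; congr 1; omega
      rw [inv_pow, hsplit]
      field_simp
      have hnj : (n : ℝ) ^ j * ((n : ℝ)⁻¹) ^ j = 1 := by
        rw [← mul_pow, mul_inv_cancel₀ hn0.ne', one_pow]
      linear_combination (-((b : ℝ) ^ (j * 2) * E)) * hnj
    have hb2n : (b : ℝ) ^ 2 / n ≤ 2 * ((c : ℝ) * t) := by
      have hb2 : (b : ℝ) ^ 2 ≤ s ^ 2 := pow_le_pow_left₀ (Nat.cast_nonneg b) hbs 2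
      rw [div_le_iff₀ hn0]
      linarith [hb2, hs2]
    have step3 : (((b : ℝ) ^ 2 / n) ^ j / (j.factorial : ℝ)) * E
        ≤ ((2 * ((c : ℝ) * t)) ^ j / (j.factorial : ℝ)) * E := by
      have hpow : ((b : ℝ) ^ 2 / n) ^ j ≤ (2 * ((c : ℝ) * t)) ^ j :=
        pow_le_pow_left₀ (by positivity) hb2n j
      have hfac : (0 : ℝ) < (j.factorial : ℝ) := by positivity
      exact mul_le_mul_of_nonneg_right ((div_le_div_iff_of_pos_right hfac).mpr hpow) hE0
    have hx0 : (0 : ℝ) ≤ (c : ℝ) * t / 16 := by positivity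
    have hexp1 : ((c : ℝ) * t / 16) ^ j / (j.factorial : ℝ) ≤ Real.exp ((c : ℝ) * t / 16) := by
      have hsum := Real.sum_le_exp_of_nonneg hx0 (j + 1)
      have hsingle : ((c : ℝ) * t / 16) ^ j / (j.factorial : ℝ)
          ≤ ∑ i ∈ Finset.range (j + 1), ((c : ℝ) * t / 16) ^ i / (i.factorial : ℝ) := by
        refine Finset.single_le_sum
          (f := fun i : ℕ => ((c : ℝ) * t / 16) ^ i / (i.factorial : ℝ))
          (fun i _ => by positivity) (Finset.self_mem_range_succ j)
      exact hsingle.trans hsum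
    have step4 : (2 * ((c : ℝ) * t)) ^ j / (j.factorial : ℝ)
        ≤ Real.exp ((c : ℝ) * t / 16) * 32 ^ j := by
      rw [show (2 * ((c : ℝ) * t)) = ((c : ℝ) * t / 16) * 32 by ring, mul_pow]
      rw [mul_comm (((c : ℝ) * t / 16) ^ j) ((32 : ℝ) ^ j), mul_div_assoc]
      rw [mul_comm (Real.exp ((c : ℝ) * t / 16)) ((32 : ℝ) ^ j)]
      exact mul_le_mul_of_nonneg_left hexp1 (by positivity)
    have hEbound : E ≤ Real.exp (-(9 / 32 * ((c : ℝ) * t))) := by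
      rw [hE]
      exact Real.exp_le_exp.mpr (by linarith)
    have h32j : (32 : ℝ) ^ j ≤ 32 ^ c :=
      pow_le_pow_right₀ (by norm_num) (le_of_lt hj)
    have h32 : (32 : ℝ) ≤ Real.exp (3 * t / 32) := by
      have e1 : (2.7 : ℝ) ≤ Real.exp 1 := le_of_lt (by
        have := Real.exp_one_gt_d9
        linarith)
      have e2 : (2.7 : ℝ) ^ 4 ≤ Real.exp 1 ^ 4 := pow_le_pow_left₀ (by norm_num) e1 4
      have e3 : (32 : ℝ) ≤ (2.7 : ℝ) ^ 4 := by norm_num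
      have e4 : Real.exp 1 ^ 4 = Real.exp ((4 : ℕ) : ℝ) := Real.exp_one_pow 4
      have e5 : Real.exp ((4 : ℕ) : ℝ) ≤ Real.exp (3 * t / 32) := by
        apply Real.exp_le_exp.mpr
        push_cast
        linarith
      exact le_trans (le_trans e3 e2) (le_trans (le_of_eq e4) e5)
    have h32c : (32 : ℝ) ^ c ≤ Real.exp (3 * ((c : ℝ) * t) / 32) := by
      calc (32 : ℝ) ^ c ≤ (Real.exp (3 * t / 32)) ^ c :=
            pow_le_pow_left₀ (by norm_num) h32 c
        _ = Real.exp ((c : ℕ) * (3 * t / 32)) := (Real.exp_nat_mul (3 * t / 32) c).symm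
        _ = Real.exp (3 * ((c : ℝ) * t) / 32) := by norm_num; ring_nf
    calc ((b.choose j : ℝ) * ((b : ℝ) ^ j * (n.descFactorial m : ℝ))) * ((n : ℝ)⁻¹) ^ b
        ≤ (((b : ℝ) ^ 2 / n) ^ j / (j.factorial : ℝ)) * E := by rw [← step2]; exact step1
      _ ≤ ((2 * ((c : ℝ) * t)) ^ j / (j.factorial : ℝ)) * E := step3
      _ ≤ (Real.exp ((c : ℝ) * t / 16) * 32 ^ j) * Real.exp (-(9 / 32 * ((c : ℝ) * t))) := by
          apply mul_le_mul step4 hEbound hE0 (by positivity)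
      _ ≤ (Real.exp ((c : ℝ) * t / 16) * 32 ^ c) * Real.exp (-(9 / 32 * ((c : ℝ) * t))) := by
          apply mul_le_mul_of_nonneg_right _ (le_of_lt (Real.exp_pos _))
          exact mul_le_mul_of_nonneg_left h32j (le_of_lt (Real.exp_pos _))
      _ ≤ (Real.exp ((c : ℝ) * t / 16) * Real.exp (3 * ((c : ℝ) * t) / 32))
            * Real.exp (-(9 / 32 * ((c : ℝ) * t))) := by
          apply mul_le_mul_of_nonneg_right _ (le_of_lt (Real.exp_pos _))
          exact mul_le_mul_of_nonneg_left h32c (le_of_lt (Real.exp_pos _))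
      _ = Real.exp (-((c : ℝ) * t) / 8) := by
          rw [← Real.exp_add, ← Real.exp_add]
          congr 1
          ring
  calc (∑ j ∈ Finset.range c,
          (b.choose j : ℝ) * ((b : ℝ) ^ j * (n.descFactorial (b - j) : ℝ))) * ((n : ℝ)⁻¹) ^ b
      = ∑ j ∈ Finset.range c,
          ((b.choose j : ℝ) * ((b : ℝ) ^ j * (n.descFactorial (b - j) : ℝ))) * ((n : ℝ)⁻¹) ^ b := by
        rw [Finset.sum_mul]
    _ ≤ ∑ j ∈ Finset.range c, Real.exp (-((c : ℝ) * t) / 8) := Finset.sum_le_sum hterm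
    _ = (c : ℝ) * Real.exp (-((c : ℝ) * t) / 8) := by
        rw [Finset.sum_const, Finset.card_range, nsmul_eq_mul]


theorem stmt_8 {Ω : Type*} [MeasurableSpace Ω] (μ : Measure Ω) [IsProbabilityMeasure μ]
    (K : ℝ) (hK : 0 < K) (n c : ℕ) (hn : 1 ≤ n) (hc : 1 ≤ c) (hcK : (c : ℝ) ≤ K * n)
    (t : ℝ) (ht : max (8 * K) 44 < t)
    (X : ℕ → Ω → ℕ) (hmeas : ∀ i, Measurable (X i))
    (hindep : iIndepFun X μ)
    (hunif : ∀ i, μ.map (X i) = unifBins n) :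
    (μ {ω | Real.sqrt t < (ballsB X c ω : ℝ) / Real.sqrt (2 * c * n)}).toReal ≤
      (c : ℝ) * Real.exp (-(c * t) / 8) := by
  classical
  have hcR : (1 : ℝ) ≤ c := by exact_mod_cast hc
  have hnR : (1 : ℝ) ≤ n := by exact_mod_cast hn
  set s : ℝ := Real.sqrt (2 * c * n * t) with hs
  set b : ℕ := Nat.floor s with hb
  -- event inclusion
  have hsub : {ω | Real.sqrt t < (ballsB X c ω : ℝ) / Real.sqrt (2 * c * n)} ⊆
      {ω | collisions X b ω < c} := by
    intro ω hω
    simp only [Set.mem_setOf_eq] at hω ⊢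
    have h2cn : (0 : ℝ) ≤ 2 * c * n := by positivity
    have h2cn0 : (0 : ℝ) < Real.sqrt (2 * c * n) :=
      Real.sqrt_pos.mpr (by nlinarith)
    have hsB : s < (ballsB X c ω : ℝ) := by
      rw [hs, Real.sqrt_mul h2cn t]
      calc Real.sqrt (2 * c * n) * Real.sqrt t
          = Real.sqrt t * Real.sqrt (2 * c * n) := by ring
        _ < (ballsB X c ω : ℝ) := (lt_div_iff₀ h2cn0).mp hω
    have hbB : b < ballsB X c ω := by
      have h1 : (b : ℝ) < ballsB X c ω :=
        lt_of_le_of_lt (Nat.floor_le (Real.sqrt_nonneg _)) hsB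
      exact_mod_cast h1
    by_contra hcol
    push_neg at hcol
    have : ballsB X c ω ≤ b := Nat.sInf_le hcol
    omega
  set Bad := (Fintype.piFinset fun _ : Fin b => Finset.Icc 1 n).filter
      fun x => (reps x).card < c with hBad
  have h2 : μ {ω | Real.sqrt t < (ballsB X c ω : ℝ) / Real.sqrt (2 * c * n)} ≤
      (Bad.card : ℝ≥0∞) * ((n : ℝ≥0∞)⁻¹) ^ b :=
    le_trans (measure_mono hsub) (prob_collisions_lt_le μ n b c X hmeas hindep hunif)
  have hnne : ((n : ℝ≥0∞)) ≠ 0 := by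
    simp only [ne_eq, Nat.cast_eq_zero]
    omega
  have hfin : (Bad.card : ℝ≥0∞) * ((n : ℝ≥0∞)⁻¹) ^ b ≠ ⊤ := by
    apply ENNReal.mul_ne_top (ENNReal.natCast_ne_top _)
    exact ENNReal.pow_ne_top (ENNReal.inv_ne_top.mpr hnne)
  have h3 := ENNReal.toReal_mono hfin h2
  refine le_trans h3 ?_
  have h4 : ((Bad.card : ℝ≥0∞) * ((n : ℝ≥0∞)⁻¹) ^ b).toReal
      = (Bad.card : ℝ) * ((n : ℝ)⁻¹) ^ b := by
    rw [ENNReal.toReal_mul, ENNReal.toReal_pow, ENNReal.toReal_inv]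
    simp
  rw [h4]
  have h5 : (Bad.card : ℝ) * ((n : ℝ)⁻¹) ^ b ≤
      ((∑ j ∈ Finset.range c, b.choose j * (b ^ j * n.descFactorial (b - j)) : ℕ) : ℝ)
        * ((n : ℝ)⁻¹) ^ b := by
    apply mul_le_mul_of_nonneg_right _ (by positivity)
    exact_mod_cast count_bad n c
  refine le_trans h5 ?_
  have h6 := analytic_bound K t hK n c hn hc hcK ht
  rw [hs, hb] at *
  convert h6 using 3
end
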